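/- Let f : 𝔻 → 𝔻 be a holomorphic self-map of the unit disk with f(0) = w₀, and let w ∈ 𝔻 \ {w₀} be a point not omitted by f. Then the Nevanlinna counting function N_f(w) = Σ_{z ∈ 𝔻, f(z) = w} (-log|z|) (zeros counted with multiplicity) satisfies N_f(w) ≤ -log|(w₀ - w)/(1 - conj(w₀)·w)|. -/

import Mathlib

open Metric Set Filter Complex
open scoped Topology ComplexConjugate

private lemma aux_normSq (a b : ℂ) :
    Complex.normSq (1 - conj a * b) - Complex.normSq (a - b)
      = (1 - Complex.normSq a) * (1 - Complex.normSq b) := by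
  simp only [Complex.normSq_apply, Complex.sub_re, Complex.sub_im, Complex.one_re,
    Complex.one_im, Complex.mul_re, Complex.mul_im, Complex.conj_re, Complex.conj_im]
  ring

private lemma one_sub_conj_mul_ne_zero {a b : ℂ} (h : ‖a‖ * ‖b‖ < 1) :
    (1 : ℂ) - conj a * b ≠ 0 := by
  intro h0
  rw [sub_eq_zero] at h0
  have h1 : ‖conj a * b‖ = 1 := by rw [← h0]; simp
  rw [norm_mul, RCLike.norm_conj] at h1
  linarith

private lemma mobius_lt_one {a b : ℂ} (ha : ‖a‖ < 1) (hb : ‖b‖ < 1) :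
    ‖(a - b) / (1 - conj a * b)‖ < 1 := by
  have hne : (1 : ℂ) - conj a * b ≠ 0 :=
    one_sub_conj_mul_ne_zero (by nlinarith [norm_nonneg a, norm_nonneg b])
  rw [norm_div, div_lt_one (norm_pos_iff.mpr hne)]
  have h1 : Complex.normSq (a - b) < Complex.normSq (1 - conj a * b) := by
    have h2 := aux_normSq a b
    have ha' : Complex.normSq a < 1 := by
      rw [← Complex.sq_norm]; nlinarith [norm_nonneg a]
    have hb' : Complex.normSq b < 1 := by
      rw [← Complex.sq_norm]; nlinarith [norm_nonneg b]
    nlinarith [mul_pos (sub_pos.mpr ha') (sub_pos.mpr hb')]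
  have e1 : ‖a - b‖ ^ 2 = Complex.normSq (a - b) := by
    rw [Complex.sq_norm]
  have e2 : ‖1 - conj a * b‖ ^ 2 = Complex.normSq (1 - conj a * b) := by
    rw [Complex.sq_norm]
  nlinarith [norm_nonneg (a - b), norm_nonneg (1 - conj a * b)]

private lemma blaschke_lower {a ζ : ℂ} {r : ℝ} (hq : ‖a‖ < r) (hζ : ‖ζ‖ = r) (hr : r < 1) :
    (r - ‖a‖) * ‖1 - conj a * ζ‖ ≤ (1 - ‖a‖ * r) * ‖ζ - a‖ := by
  set q := ‖a‖ with hqdef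
  have hq0 : 0 ≤ q := norm_nonneg a
  set t := (conj a * ζ).re with htdef
  have ht : t ≤ q * r := by
    calc t ≤ ‖conj a * ζ‖ := Complex.re_le_norm _
    _ = q * r := by rw [norm_mul, RCLike.norm_conj, hζ]
  have e1 : Complex.normSq (1 - conj a * ζ) = 1 - 2 * t + q ^ 2 * r ^ 2 := by
    have : Complex.normSq (1 - conj a * ζ) = 1 - 2 * (conj a * ζ).re + Complex.normSq (conj a * ζ) := by
      simp only [Complex.normSq_apply, Complex.sub_re, Complex.sub_im, Complex.one_re,
        Complex.one_im]
      ring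
    have ea : Complex.normSq a = q ^ 2 := by rw [← Complex.sq_norm]
    have eb : Complex.normSq ζ = r ^ 2 := by rw [← Complex.sq_norm, hζ]
    rw [this, Complex.normSq_mul, Complex.normSq_conj, ← htdef, ea, eb]
  have e2 : Complex.normSq (ζ - a) = r ^ 2 - 2 * t + q ^ 2 := by
    have h1 : ζ.re * ζ.re + ζ.im * ζ.im = r ^ 2 := by
      have : Complex.normSq ζ = r ^ 2 := by rw [← Complex.sq_norm, hζ]
      simpa [Complex.normSq_apply] using this
    have h2 : a.re * a.re + a.im * a.im = q ^ 2 := by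
      have : Complex.normSq a = q ^ 2 := by rw [← Complex.sq_norm]
      simpa [Complex.normSq_apply] using this
    have h3 : t = a.re * ζ.re + a.im * ζ.im := by
      rw [htdef]
      simp only [Complex.mul_re, Complex.conj_re, Complex.conj_im]
      ring
    simp only [Complex.normSq_apply, Complex.sub_re, Complex.sub_im]
    nlinarith [h1, h2, h3]
  have key : (r - q) ^ 2 * Complex.normSq (1 - conj a * ζ)
      ≤ (1 - q * r) ^ 2 * Complex.normSq (ζ - a) := by
    rw [e1, e2]
    nlinarith [mul_nonneg (mul_nonneg (by nlinarith : (0:ℝ) ≤ 1 - r ^ 2)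
      (by nlinarith : (0:ℝ) ≤ 1 - q ^ 2)) (by linarith : (0:ℝ) ≤ q * r - t)]
  have f1 : ‖1 - conj a * ζ‖ ^ 2 = Complex.normSq (1 - conj a * ζ) := by
    rw [Complex.sq_norm]
  have f2 : ‖ζ - a‖ ^ 2 = Complex.normSq (ζ - a) := by rw [Complex.sq_norm]
  have hrq : 0 ≤ r - q := by linarith
  have hqr1 : 0 ≤ 1 - q * r := by nlinarith
  nlinarith [norm_nonneg (1 - conj a * ζ), norm_nonneg (ζ - a), key,
    mul_nonneg hrq (norm_nonneg (1 - conj a * ζ)), mul_nonneg hqr1 (norm_nonneg (ζ - a))]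

private lemma core_littlewood : ∀ (N : ℕ) (m : ℂ → ℕ) (g : ℂ → ℂ),
    DifferentiableOn ℂ g (ball 0 1) →
    (∀ ζ ∈ ball (0:ℂ) 1, ‖g ζ‖ ≤ 1) →
    ∀ (s : Finset ℂ), (∀ z ∈ s, z ∈ ball (0:ℂ) 1) →
    (∀ z ∈ s, ∃ h : ℂ → ℂ, AnalyticAt ℂ h z ∧ ∀ᶠ ζ in 𝓝 z, g ζ = (ζ - z) ^ m z * h ζ) →
    ∑ z ∈ s, m z = N →
    ‖g 0‖ ≤ ∏ z ∈ s, ‖z‖ ^ m z := by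
  intro N
  induction N with
  | zero =>
    intro m g hg hb s hs hord hsum
    have hz : ∀ z ∈ s, m z = 0 := by
      intro z hz
      exact Finset.sum_eq_zero_iff.mp hsum z hz
    rw [Finset.prod_congr rfl (fun z hz' => by rw [hz z hz', pow_zero])]
    simpa using hb 0 (mem_ball_self one_pos)
  | succ N ih =>
    intro m g hg hb s hs hord hsum
    have hex : ∃ a ∈ s, m a ≠ 0 := by
      by_contra hcon
      push_neg at hcon
      rw [Finset.sum_eq_zero hcon] at hsum
      exact Nat.succ_ne_zero N hsum.symm
    obtain ⟨a, has, hma⟩ := hex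
    obtain ⟨h, hh, hev⟩ := hord a has
    have hga : g a = 0 := by
      have h0 := hev.self_of_nhds
      simpa [sub_self, zero_pow hma] using h0
    by_cases ha0 : a = 0
    · subst ha0
      rw [hga]
      simpa using Finset.prod_nonneg fun z _ => pow_nonneg (norm_nonneg z) _
    · have haB : a ∈ ball (0:ℂ) 1 := hs a has
      have ha1 : ‖a‖ < 1 := mem_ball_zero_iff.mp haB
      set g₁ : ℂ → ℂ := fun ζ => (1 - conj a * ζ) * dslope g a ζ with hg₁def
      have hdiff1 : DifferentiableOn ℂ g₁ (ball 0 1) := by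
        apply DifferentiableOn.mul
        · exact (differentiable_const _ |>.sub ((differentiable_const _).mul
            differentiable_id)).differentiableOn
        · exact (Complex.differentiableOn_dslope (isOpen_ball.mem_nhds haB)).mpr hg
      have hfac : ∀ ζ : ℂ, (1 - conj a * ζ) * g ζ = (ζ - a) * g₁ ζ := by
        intro ζ
        have h1 := sub_smul_dslope g a ζ
        rw [smul_eq_mul, hga, sub_zero] at h1
        calc (1 - conj a * ζ) * g ζ = (1 - conj a * ζ) * ((ζ - a) * dslope g a ζ) := by rw [h1]
        _ = (ζ - a) * g₁ ζ := by rw [hg₁def]; ring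
      -- the bound ‖g₁‖ ≤ 1 on the ball
      have hO : ∀ ζ ∈ ball (0:ℂ) 1, ‖g₁ ζ‖ ≤ 1 := by
        intro ζ hζ
        have hζ1 : ‖ζ‖ < 1 := mem_ball_zero_iff.mp hζ
        have hM : max ‖ζ‖ ‖a‖ < 1 := max_lt hζ1 ha1
        have bound : ∀ r ∈ Ioo (max ‖ζ‖ ‖a‖) 1, ‖g₁ ζ‖ ≤ (1 - ‖a‖ * r) / (r - ‖a‖) := by
          rintro r ⟨hr1, hr2⟩
          have hra : ‖a‖ < r := lt_of_le_of_lt (le_max_right _ _) hr1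
          have hr0 : 0 < r := lt_of_le_of_lt (norm_nonneg a) hra
          apply Complex.norm_le_of_forall_mem_frontier_norm_le (isBounded_ball (x := (0:ℂ)) (r := r))
          · apply DifferentiableOn.diffContOnCl
            rw [closure_ball (0:ℂ) hr0.ne']
            exact hdiff1.mono (closedBall_subset_ball hr2)
          · intro ξ hξ
            rw [frontier_ball (0:ℂ) hr0.ne'] at hξ
            have hξr : ‖ξ‖ = r := by simpa using hξ
            have hξB : ξ ∈ ball (0:ℂ) 1 := mem_ball_zero_iff.mpr (by rw [hξr]; exact hr2)
            have hξa : ξ ≠ a := by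
              intro hEq; rw [hEq] at hξr; exact absurd hξr (ne_of_lt hra)
            have hpos : 0 < ‖ξ - a‖ := norm_pos_iff.mpr (sub_ne_zero.mpr hξa)
            have h1 : ‖1 - conj a * ξ‖ * ‖g ξ‖ = ‖ξ - a‖ * ‖g₁ ξ‖ := by
              rw [← norm_mul, ← norm_mul, hfac ξ]
            have h2 := blaschke_lower hra hξr hr2
            have hgξ := hb ξ hξB
            rw [le_div_iff₀ (by linarith : (0:ℝ) < r - ‖a‖)]
            have h3 : ‖g₁ ξ‖ * ‖ξ - a‖ ≤ ‖1 - conj a * ξ‖ := by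
              rw [mul_comm, ← h1]
              calc ‖1 - conj a * ξ‖ * ‖g ξ‖ ≤ ‖1 - conj a * ξ‖ * 1 :=
                mul_le_mul_of_nonneg_left hgξ (norm_nonneg _)
              _ = ‖1 - conj a * ξ‖ := mul_one _
            nlinarith [norm_nonneg (1 - conj a * ξ), norm_nonneg (g₁ ξ)]
          · rw [closure_ball (0:ℂ) hr0.ne']
            exact mem_closedBall_zero_iff.mpr (le_of_lt (lt_of_le_of_lt (le_max_left _ _) hr1))
        have hlim : Tendsto (fun r : ℝ => (1 - ‖a‖ * r) / (r - ‖a‖)) (𝓝[<] (1:ℝ)) (𝓝 1) := by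
          have hc : ContinuousAt (fun r : ℝ => (1 - ‖a‖ * r) / (r - ‖a‖)) 1 := by
            apply ContinuousAt.div
            · fun_prop
            · fun_prop
            · simp only [ne_eq]
              intro hEq
              have : ‖a‖ = 1 := by linarith [sub_eq_zero.mp hEq]
              linarith
          have h1 : (1 - ‖a‖ * 1) / (1 - ‖a‖) = 1 := by
            rw [mul_one]
            exact div_self (by linarith)
          have := hc.tendsto
          rw [h1] at this
          exact tendsto_nhdsWithin_of_tendsto_nhds this
        refine ge_of_tendsto hlim ?_
        filter_upwards [Ioo_mem_nhdsLT_of_mem (⟨hM, le_refl (1:ℝ)⟩ : (1:ℝ) ∈ Ioc (max ‖ζ‖ ‖a‖) 1)]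
          with r hr using bound r hr
      set m' := Function.update m a (m a - 1) with hm'def
      have hord1 : ∀ z ∈ s, ∃ h' : ℂ → ℂ, AnalyticAt ℂ h' z ∧
          ∀ᶠ ζ in 𝓝 z, g₁ ζ = (ζ - z) ^ m' z * h' ζ := by
        intro z hz
        by_cases hza : z = a
        · subst hza
          simp only [hm'def, Function.update_self]
          refine ⟨fun ζ => (1 - conj z * ζ) * h ζ, ?_, ?_⟩
          · exact (analyticAt_const.sub (analyticAt_const.mul analyticAt_id)).mul hh
          · have hpunct : ∀ᶠ ζ in 𝓝[≠] z, g₁ ζ = (ζ - z) ^ (m z - 1) * ((1 - conj z * ζ) * h ζ) := by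
              filter_upwards [eventually_nhdsWithin_of_eventually_nhds hev, self_mem_nhdsWithin]
                with ζ hζ hne
              have hne' : ζ - z ≠ 0 := sub_ne_zero.mpr hne
              have hd : dslope g z ζ = (ζ - z)⁻¹ * g ζ := by
                rw [dslope_of_ne g hne, slope_def_field, hga, sub_zero, div_eq_inv_mul]
              have hpow : (ζ - z) ^ m z = (ζ - z) * (ζ - z) ^ (m z - 1) := by
                obtain ⟨k, hk⟩ := Nat.exists_eq_succ_of_ne_zero hma
                rw [hk]
                simp [pow_succ']
              simp only [hg₁def]
              rw [hd, hζ, hpow]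
              field_simp
            have hcont1 : ContinuousAt g₁ z :=
              (hdiff1.differentiableAt (isOpen_ball.mem_nhds haB)).continuousAt
            have hcont2 : ContinuousAt
                (fun ζ => (ζ - z) ^ (m z - 1) * ((1 - conj z * ζ) * h ζ)) z :=
              ContinuousAt.mul (by fun_prop) (ContinuousAt.mul (by fun_prop) hh.continuousAt)
            have hval : g₁ z = (z - z) ^ (m z - 1) * ((1 - conj z * z) * h z) :=
              tendsto_nhds_unique (hcont1.tendsto.mono_left nhdsWithin_le_nhds)
                ((hcont2.tendsto.mono_left nhdsWithin_le_nhds).congr'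
                  (by filter_upwards [hpunct] with ζ hζ using hζ.symm))
            rw [← nhdsNE_sup_pure, eventually_sup]
            exact ⟨hpunct, by simpa using hval⟩
        · obtain ⟨hfun, hhz, hevz⟩ := hord z hz
          simp only [hm'def, Function.update_of_ne hza]
          refine ⟨fun ζ => (1 - conj a * ζ) / (ζ - a) * hfun ζ, ?_, ?_⟩
          · exact (((analyticAt_const.sub (analyticAt_const.mul analyticAt_id)).div
              ((analyticAt_id).sub analyticAt_const) (sub_ne_zero.mpr hza)).mul hhz)
          · filter_upwards [hevz, eventually_ne_nhds hza] with ζ hζ hne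
            have hne' : ζ - a ≠ 0 := sub_ne_zero.mpr hne
            have hd : dslope g a ζ = (ζ - a)⁻¹ * g ζ := by
              rw [dslope_of_ne g hne, slope_def_field, hga, sub_zero, div_eq_inv_mul]
            simp only [hg₁def]
            rw [hd, hζ]
            field_simp
      have hsum' : ∑ z ∈ s, m' z = N := by
        have h1 : ∑ z ∈ s, m' z = m' a + ∑ z ∈ s.erase a, m' z :=
          (Finset.add_sum_erase s m' has).symm
        have h1' : ∑ z ∈ s.erase a, m' z = ∑ z ∈ s.erase a, m z :=
          Finset.sum_congr rfl fun z hz' =>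
            by rw [hm'def, Function.update_of_ne (Finset.ne_of_mem_erase hz')]
        have h2 : m a + ∑ z ∈ s.erase a, m z = ∑ z ∈ s, m z := Finset.add_sum_erase s m has
        have h3 : m' a = m a - 1 := by rw [hm'def, Function.update_self]
        rw [hsum] at h2
        rw [h1, h1', h3]
        omega
      have IH := ih m' g₁ hdiff1 hO s hs hord1 hsum'
      have h0 : ‖g 0‖ = ‖a‖ * ‖g₁ 0‖ := by
        have hf0 := hfac 0
        simp only [mul_zero, sub_zero, zero_sub, one_mul, neg_mul] at hf0
        rw [hf0, norm_neg, norm_mul]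
      have hprod : ∏ z ∈ s, ‖z‖ ^ m z = ‖a‖ * ∏ z ∈ s, ‖z‖ ^ m' z := by
        have h1 : ∏ z ∈ s, ‖z‖ ^ m' z = ‖a‖ ^ m' a * ∏ z ∈ s.erase a, ‖z‖ ^ m' z :=
          (Finset.mul_prod_erase s _ has).symm
        have h1' : ∏ z ∈ s.erase a, ‖z‖ ^ m' z = ∏ z ∈ s.erase a, ‖z‖ ^ m z :=
          Finset.prod_congr rfl fun z hz' =>
            by rw [hm'def, Function.update_of_ne (Finset.ne_of_mem_erase hz')]
        have h2 : ∏ z ∈ s, ‖z‖ ^ m z = ‖a‖ ^ m a * ∏ z ∈ s.erase a, ‖z‖ ^ m z :=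
          (Finset.mul_prod_erase s _ has).symm
        have h3 : m' a = m a - 1 := by rw [hm'def, Function.update_self]
        rw [h1, h1', h2, h3, ← mul_assoc, ← pow_succ']
        congr 2
        omega
      rw [h0, hprod]
      exact mul_le_mul_of_nonneg_left IH (norm_nonneg a)


/-- Littlewood's inequality: for a holomorphic self-map `f` of the unit disk
with `f(0) = w₀` and a point `w ≠ w₀` in the range of `f`, the Nevanlinna
counting function `N_f(w) = Σ_{f(z)=w} (-log|z|)` (with multiplicities `m z`)
satisfies `N_f(w) ≤ -log|(w₀ - w)/(1 - conj w₀ · w)|`. -/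
theorem littlewood_inequality (f : ℂ → ℂ)
    (hf : DifferentiableOn ℂ f (Metric.ball 0 1))
    (hmaps : Set.MapsTo f (Metric.ball 0 1) (Metric.ball 0 1))
    (w₀ : ℂ) (hw₀ : f 0 = w₀) (w : ℂ) (hw : w ∈ Metric.ball (0 : ℂ) 1)
    (hww₀ : w ≠ w₀) (hrange : ∃ z ∈ Metric.ball (0 : ℂ) 1, f z = w)
    (m : ℂ → ℕ)
    (hm : ∀ z ∈ Metric.ball (0 : ℂ) 1,
      ∃ h : AnalyticAt ℂ (fun ζ => f ζ - w) z, analyticOrderAt (fun ζ => f ζ - w) z = (m z : ℕ∞)) :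
    (∑' z : ℂ,
        Set.indicator (Metric.ball (0 : ℂ) 1)
          (fun z => (m z : ℝ) * (-Real.log ‖z‖)) z)
      ≤ -Real.log ‖(w₀ - w) / (1 - (starRingEnd ℂ) w₀ * w)‖ := by
  have hw1 : ‖w‖ < 1 := mem_ball_zero_iff.mp hw
  have hw₀B : w₀ ∈ ball (0:ℂ) 1 := hw₀ ▸ hmaps (mem_ball_self one_pos)
  have hw₀1 : ‖w₀‖ < 1 := mem_ball_zero_iff.mp hw₀B
  set g : ℂ → ℂ := fun ζ => (w - f ζ) / (1 - conj w * f ζ) with hgdef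
  have hden : ∀ ζ ∈ ball (0:ℂ) 1, (1 : ℂ) - conj w * f ζ ≠ 0 := by
    intro ζ hζ
    exact one_sub_conj_mul_ne_zero
      (by nlinarith [norm_nonneg w, norm_nonneg (f ζ), mem_ball_zero_iff.mp (hmaps hζ)])
  have hgdiff : DifferentiableOn ℂ g (ball 0 1) := by
    apply DifferentiableOn.div
    · exact (differentiableOn_const _).sub hf
    · exact (differentiableOn_const _).sub ((differentiableOn_const _).mul hf)
    · exact hden
  have hgb : ∀ ζ ∈ ball (0:ℂ) 1, ‖g ζ‖ ≤ 1 := fun ζ hζ =>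
    le_of_lt (mobius_lt_one hw1 (mem_ball_zero_iff.mp (hmaps hζ)))
  -- the value at 0
  have hg0 : ‖g 0‖ = ‖(w₀ - w) / (1 - conj w₀ * w)‖ := by
    have e1 : g 0 = (w - w₀) / (1 - conj w * w₀) := by simp [hgdef, hw₀]
    have e2 : ‖w - w₀‖ = ‖w₀ - w‖ := norm_sub_rev _ _
    have e3 : ‖(1 : ℂ) - conj w * w₀‖ = ‖(1 : ℂ) - conj w₀ * w‖ := by
      have : (1 : ℂ) - conj w₀ * w = conj ((1 : ℂ) - conj w * w₀) := by
        simp [map_sub, map_mul, Complex.conj_conj]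
        ring
      rw [this, RCLike.norm_conj]
    rw [e1, norm_div, norm_div, e2, e3]
  have hg0pos : 0 < ‖g 0‖ := by
    rw [hg0]
    apply norm_pos_iff.mpr
    exact div_ne_zero (sub_ne_zero.mpr (fun hEq => hww₀ (sub_eq_zero.mp (by rw [hEq]; ring))))
      (one_sub_conj_mul_ne_zero (by nlinarith [norm_nonneg w₀, norm_nonneg w]))
  -- order hypothesis for g at points of the ball
  have hordg : ∀ z ∈ ball (0:ℂ) 1, ∃ h' : ℂ → ℂ, AnalyticAt ℂ h' z ∧
      ∀ᶠ ζ in 𝓝 z, g ζ = (ζ - z) ^ m z * h' ζ := by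
    intro z hz
    obtain ⟨hA, hord⟩ := hm z hz
    obtain ⟨hfun, hhz, hne0, hev⟩ := hA.analyticOrderAt_eq_natCast.mp hord
    refine ⟨fun ζ => -hfun ζ / (1 - conj w * f ζ), ?_, ?_⟩
    · apply AnalyticAt.div
      · exact hhz.neg
      · exact analyticAt_const.sub (analyticAt_const.mul
          (hf.analyticAt (isOpen_ball.mem_nhds hz)))
      · exact hden z hz
    · filter_upwards [hev] with ζ hζ
      have : w - f ζ = -((ζ - z) ^ m z * hfun ζ) := by
        rw [smul_eq_mul] at hζ
        have := sub_eq_iff_eq_add.mp hζ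
        rw [this]; ring
      rw [hgdef]
      simp only
      rw [this]
      ring
  -- partial sums are bounded
  have key : ∀ s : Finset ℂ,
      (∑ z ∈ s, Set.indicator (ball (0:ℂ) 1) (fun z => (m z : ℝ) * (-Real.log ‖z‖)) z)
        ≤ -Real.log ‖g 0‖ := by
    intro s
    classical
    rw [Finset.sum_indicator_eq_sum_filter]
    have hdrop : ∑ z ∈ s.filter (· ∈ ball (0:ℂ) 1), (m z : ℝ) * (-Real.log ‖z‖)
        = ∑ z ∈ (s.filter (· ∈ ball (0:ℂ) 1)).filter (fun z => z ≠ 0 ∧ m z ≠ 0),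
            (m z : ℝ) * (-Real.log ‖z‖) := by
      symm
      apply Finset.sum_filter_of_ne
      intro z _ hnz
      constructor
      · intro hz0
        apply hnz
        rw [hz0]
        simp
      · intro hmz
        apply hnz
        rw [hmz]
        simp
    rw [hdrop]
    set s₂ := (s.filter (· ∈ ball (0:ℂ) 1)).filter (fun z => z ≠ 0 ∧ m z ≠ 0) with hs₂
    have hs₂B : ∀ z ∈ s₂, z ∈ ball (0:ℂ) 1 := by
      intro z hz
      have := Finset.mem_filter.mp (Finset.mem_filter.mp hz).1
      exact this.2
    have hcore := core_littlewood (∑ z ∈ s₂, m z) m g hgdiff hgb s₂ hs₂B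
      (fun z hz => hordg z (hs₂B z hz)) rfl
    have hfacpos : ∀ z ∈ s₂, (0:ℝ) < ‖z‖ ^ m z := by
      intro z hz
      have hz0 : z ≠ 0 := (Finset.mem_filter.mp hz).2.1
      exact pow_pos (norm_pos_iff.mpr hz0) _
    have hlog : Real.log ‖g 0‖ ≤ Real.log (∏ z ∈ s₂, ‖z‖ ^ m z) :=
      Real.log_le_log hg0pos hcore
    rw [Real.log_prod (fun z hz => (hfacpos z hz).ne')] at hlog
    have hsum2 : ∑ z ∈ s₂, Real.log (‖z‖ ^ m z) = ∑ z ∈ s₂, (m z : ℝ) * Real.log ‖z‖ :=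
      Finset.sum_congr rfl fun z _ => Real.log_pow _ _
    rw [hsum2] at hlog
    have : ∑ z ∈ s₂, (m z : ℝ) * (-Real.log ‖z‖) = -∑ z ∈ s₂, (m z : ℝ) * Real.log ‖z‖ := by
      rw [← Finset.sum_neg_distrib]
      exact Finset.sum_congr rfl fun z _ => by ring
    rw [this]
    linarith
  rw [← hg0]
  by_cases hsumm : Summable (fun z : ℂ =>
      Set.indicator (ball (0:ℂ) 1) (fun z => (m z : ℝ) * (-Real.log ‖z‖)) z)
  · exact Summable.tsum_le_of_sum_le hsumm key
  · rw [tsum_eq_zero_of_not_summable hsumm]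
    simpa using key ∅
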